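/- Fix 0 < r < 1 and define ζ(r,p) := p · [D(β(r,p) ‖ p)]^{−1}, where β(r,p) := ln((1−p)/(1−rp)) / (ln r + ln((1−p)/(1−rp))) and D is the binary relative entropy. Then ζ(r,p) is strictly decreasing in p on (0,1). -/

import Mathlib

/-- Binary relative entropy. -/
noncomputable def binRelEnt (p q : ℝ) : ℝ :=
  p * Real.log (p / q) + (1 - p) * Real.log ((1 - p) / (1 - q))

/-- The function β(r,p). -/
noncomputable def betaFn (r p : ℝ) : ℝ :=
  Real.log ((1 - p) / (1 - r * p)) / (Real.log r + Real.log ((1 - p) / (1 - r * p)))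

open Real

lemma amgm2_strict {a b w : ℝ} (ha : 0 < a) (hb : 0 < b) (hw0 : 0 < w) (hw1 : w < 1)
    (hab : a ≠ b) : a ^ w * b ^ (1 - w) < w * a + (1 - w) * b := by
  have h := strictConcaveOn_log_Ioi.2 (Set.mem_Ioi.2 ha) (Set.mem_Ioi.2 hb) hab hw0
    (by linarith : (0:ℝ) < 1 - w) (by ring)
  simp only [smul_eq_mul] at h
  have key : a ^ w * b ^ (1 - w) = Real.exp (w * log a + (1 - w) * log b) := by
    rw [Real.exp_add, rpow_def_of_pos ha, rpow_def_of_pos hb]; ring_nf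
  rw [key]
  calc Real.exp (w * log a + (1 - w) * log b) < Real.exp (log (w * a + (1 - w) * b)) :=
        Real.exp_lt_exp.2 h
    _ = w * a + (1 - w) * b := Real.exp_log (by nlinarith [mul_pos hw0 ha, mul_pos (show (0:ℝ) < 1 - w by linarith) hb])

lemma kl_nonneg {x y : ℝ} (hx0 : 0 < x) (hx1 : x < 1) (hy0 : 0 < y) (hy1 : y < 1) :
    0 ≤ x * Real.log (x / y) + (1 - x) * Real.log ((1 - x) / (1 - y)) := by
  have h1 : Real.log (y / x) ≤ y / x - 1 := Real.log_le_sub_one_of_pos (div_pos (by linarith) (by linarith))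
  have h2 : Real.log ((1 - y) / (1 - x)) ≤ (1 - y) / (1 - x) - 1 :=
    Real.log_le_sub_one_of_pos (div_pos (by linarith) (by linarith))
  have e1 : Real.log (x / y) = - Real.log (y / x) := by
    rw [← Real.log_inv]; congr 1; field_simp
  have e2 : Real.log ((1 - x) / (1 - y)) = - Real.log ((1 - y) / (1 - x)) := by
    rw [← Real.log_inv]; congr 1; field_simp
  rw [e1, e2]
  have hx1' : (0:ℝ) < 1 - x := by linarith
  have b1 : x * Real.log (y / x) ≤ y - x := by
    have := mul_le_mul_of_nonneg_left h1 hx0.le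
    calc x * Real.log (y/x) ≤ x * (y/x - 1) := this
      _ = y - x := by field_simp
  have b2 : (1 - x) * Real.log ((1 - y) / (1 - x)) ≤ (1 - y) - (1 - x) := by
    have := mul_le_mul_of_nonneg_left h2 hx1'.le
    calc (1-x) * Real.log ((1-y)/(1-x)) ≤ (1-x) * ((1-y)/(1-x) - 1) := this
      _ = (1-y) - (1-x) := by field_simp
  nlinarith

lemma holder2_strict {A1 A2 B1 B2 w : ℝ} (hA1 : 0 < A1) (hA2 : 0 < A2) (hB1 : 0 < B1)
    (hB2 : 0 < B2) (hw0 : 0 < w) (hw1 : w < 1) (hne : A1 * B2 ≠ A2 * B1) :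
    A1 ^ w * B1 ^ (1 - w) + A2 ^ w * B2 ^ (1 - w) < (A1 + A2) ^ w * (B1 + B2) ^ (1 - w) := by
  set SA := A1 + A2 with hSA
  set SB := B1 + B2 with hSB
  have hSA0 : 0 < SA := by positivity
  have hSB0 : 0 < SB := by positivity
  have hne1 : A1 / SA ≠ B1 / SB := by
    intro h
    apply hne
    field_simp at h
    nlinarith [h]
  have hne2 : A2 / SA ≠ B2 / SB := by
    intro h
    apply hne
    field_simp at h
    nlinarith [h]
  have h1 := amgm2_strict (by positivity : (0:ℝ) < A1 / SA) (by positivity : (0:ℝ) < B1 / SB)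
    hw0 hw1 hne1
  have h2 := amgm2_strict (by positivity : (0:ℝ) < A2 / SA) (by positivity : (0:ℝ) < B2 / SB)
    hw0 hw1 hne2
  have hsum : (A1/SA) ^ w * (B1/SB) ^ (1-w) + (A2/SA) ^ w * (B2/SB) ^ (1-w) < 1 := by
    have : w * (A1/SA) + (1-w) * (B1/SB) + (w * (A2/SA) + (1-w) * (B2/SB)) = 1 := by
      field_simp; ring
    linarith
  have expand : ∀ X B : ℝ, 0 < X → 0 < B → (X/SA) ^ w * (B/SB) ^ (1-w)
      = X ^ w * B ^ (1-w) / (SA ^ w * SB ^ (1-w)) := by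
    intro X B hX hB
    rw [div_rpow hX.le hSA0.le, div_rpow hB.le hSB0.le]
    ring
  rw [expand _ _ hA1 hB1, expand _ _ hA2 hB2] at hsum
  have hpow : 0 < SA ^ w * SB ^ (1 - w) := by positivity
  rw [← add_div, div_lt_one hpow] at hsum
  linarith


lemma beta_facts {r p : ℝ} (hr0 : 0 < r) (hr1 : r < 1) (hp0 : 0 < p) (hp1 : p < 1) :
    (0 < betaFn r p ∧ betaFn r p < 1) ∧ (r * p < betaFn r p ∧ betaFn r p < p) ∧
    betaFn r p * Real.log r = (1 - betaFn r p) * Real.log ((1 - p) / (1 - r * p)) := by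
  have h1p : (0:ℝ) < 1 - p := by linarith
  have hrpp : r * p < p := by nlinarith
  have h1rp : (0:ℝ) < 1 - r * p := by nlinarith
  set a := Real.log r with ha_def
  set L := Real.log ((1 - p) / (1 - r * p)) with hL_def
  have hratio_pos : (0:ℝ) < (1 - p) / (1 - r * p) := div_pos h1p h1rp
  have hratio_lt : (1 - p) / (1 - r * p) < 1 := by rw [div_lt_one h1rp]; nlinarith
  have ha : a < 0 := Real.log_neg hr0 hr1
  have hL : L < 0 := Real.log_neg hratio_pos hratio_lt
  have haL : a + L < 0 := by linarith
  have haL' : a + L ≠ 0 := ne_of_lt haL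
  have hbeta : betaFn r p = L / (a + L) := rfl
  have hb0 : 0 < betaFn r p := by
    rw [hbeta]; exact div_pos_of_neg_of_neg hL haL
  have hb1 : betaFn r p < 1 := by
    rw [hbeta, div_lt_one_of_neg haL]; linarith
  -- log bounds
  have hinvlog : Real.log ((1 - r*p)/(1 - p)) = -L := by
    rw [hL_def, ← Real.log_inv]; congr 1; field_simp
  have hA : Real.log ((1 - r*p)/(1 - p)) ≤ (1 - r*p)/(1-p) - 1 :=
    Real.log_le_sub_one_of_pos (div_pos h1rp h1p)
  have hB : L ≤ (1 - p)/(1 - r*p) - 1 := Real.log_le_sub_one_of_pos hratio_pos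
  have ha_strict : a < r - 1 := Real.log_lt_sub_one_of_pos hr0 (ne_of_lt hr1)
  have hainv : -a < (1 - r)/r := by
    have h := Real.log_lt_sub_one_of_pos (show (0:ℝ) < 1/r by positivity)
      (by intro h; rw [div_eq_one_iff_eq (ne_of_gt hr0)] at h; linarith)
    rw [Real.log_div one_ne_zero (ne_of_gt hr0), Real.log_one] at h
    have : (1:ℝ)/r - 1 = (1-r)/r := by field_simp
    rw [this] at h; linarith
  -- beta < p
  have hbp : betaFn r p < p := by
    rw [hbeta, div_lt_iff_of_neg haL]
    -- goal : p * (a + L) < L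
    rw [hinvlog] at hA
    have h1 : (1-p) * (-L) ≤ p * (1 - r) := by
      have := mul_le_mul_of_nonneg_left hA h1p.le
      have e : (1-p) * ((1 - r*p)/(1-p) - 1) = p * (1 - r) := by field_simp; ring
      linarith [e ▸ this]
    nlinarith
  -- r*p < beta
  have hrpb : r * p < betaFn r p := by
    rw [hbeta, lt_div_iff_of_neg haL]
    -- goal : L < r * p * (a + L)
    have h2 : (1 - r*p) * L ≤ -(p * (1-r)) := by
      have := mul_le_mul_of_nonneg_left hB h1rp.le
      have e : (1 - r*p) * ((1-p)/(1 - r*p) - 1) = -(p * (1-r)) := by field_simp; ring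
      linarith [e ▸ this]
    have h3 : r * p * (-a) < p * (1 - r) := by
      have := mul_lt_mul_of_pos_left hainv (mul_pos hr0 hp0)
      have e : r * p * ((1-r)/r) = p * (1-r) := by field_simp
      nlinarith
    nlinarith
  have hrel : betaFn r p * a = (1 - betaFn r p) * L := by
    rw [hbeta]; field_simp; ring
  exact ⟨⟨hb0, hb1⟩, ⟨hrpb, hbp⟩, hrel⟩

noncomputable def Zf (r w p : ℝ) : ℝ :=
  p * r ^ (1 - w) + (1 - p) ^ w * (1 - r * p) ^ (1 - w)

lemma Zf_pos {r w p : ℝ} (hr0 : 0 < r) (hr1 : r < 1) (hp0 : 0 < p) (hp1 : p < 1) :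
    0 < Zf r w p := by
  have h1p : (0:ℝ) < 1 - p := by linarith
  have h1rp : (0:ℝ) < 1 - r * p := by nlinarith
  unfold Zf
  positivity

lemma Zf_lt_one {r w p : ℝ} (hr0 : 0 < r) (hr1 : r < 1) (hp0 : 0 < p) (hp1 : p < 1)
    (hw0 : 0 < w) (hw1 : w < 1) : Zf r w p < 1 := by
  have h1p : (0:ℝ) < 1 - p := by linarith
  have h1rp : (0:ℝ) < 1 - r * p := by nlinarith
  have h1 : (1:ℝ) ^ w * r ^ (1 - w) < w * 1 + (1 - w) * r :=
    amgm2_strict one_pos hr0 hw0 hw1 (by intro h; linarith)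
  rw [Real.one_rpow] at h1
  have h2 : (1 - p) ^ w * (1 - r*p) ^ (1 - w) ≤ w * (1 - p) + (1 - w) * (1 - r*p) :=
    Real.geom_mean_le_arith_mean2_weighted hw0.le (by linarith) h1p.le h1rp.le (by ring)
  unfold Zf
  nlinarith [mul_lt_mul_of_pos_left h1 hp0]

lemma log_Zf_neg {r w p : ℝ} (hr0 : 0 < r) (hr1 : r < 1) (hp0 : 0 < p) (hp1 : p < 1)
    (hw0 : 0 < w) (hw1 : w < 1) : 0 < -Real.log (Zf r w p) := by
  have := Real.log_neg (Zf_pos hr0 hr1 hp0 hp1) (Zf_lt_one hr0 hr1 hp0 hp1 hw0 hw1)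
  linarith

lemma binRelEnt_expand {x y : ℝ} (hx0 : 0 < x) (hx1 : x < 1) (hy0 : 0 < y) (hy1 : y < 1) :
    binRelEnt x y = x * Real.log x - x * Real.log y
      + (1 - x) * Real.log (1 - x) - (1 - x) * Real.log (1 - y) := by
  unfold binRelEnt
  rw [Real.log_div hx0.ne' hy0.ne',
    Real.log_div (by linarith : (1:ℝ) - x ≠ 0) (by linarith : (1:ℝ) - y ≠ 0)]
  ring

set_option maxHeartbeats 1000000 in
lemma exists_lam {r p : ℝ} (hr0 : 0 < r) (hr1 : r < 1) (hp0 : 0 < p) (hp1 : p < 1) :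
    ∃ w, 0 < w ∧ w < 1 ∧ binRelEnt (betaFn r p) p = -Real.log (Zf r w p) := by
  obtain ⟨⟨hb0, hb1⟩, ⟨hrpb, hbp⟩, hrel⟩ := beta_facts hr0 hr1 hp0 hp1
  set b := betaFn r p with hb_def
  have h1p : (0:ℝ) < 1 - p := by linarith
  have h1rp : (0:ℝ) < 1 - r * p := by nlinarith
  have h1b : (0:ℝ) < 1 - b := by linarith
  set a := Real.log r with ha_def
  set L := Real.log ((1 - p) / (1 - r * p)) with hL_def
  have hLdiv : L = Real.log (1 - p) - Real.log (1 - r * p) :=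
    Real.log_div (ne_of_gt h1p) (ne_of_gt h1rp)
  have ha : a < 0 := Real.log_neg hr0 hr1
  have hL : L < 0 := by
    apply Real.log_neg (div_pos h1p h1rp)
    rw [div_lt_one h1rp]; nlinarith
  have haL : a + L < 0 := by linarith
  set w := (Real.log b - Real.log (1 - b) - Real.log p - a + Real.log (1 - r * p)) / (-(a + L))
    with hw_def
  have hdenom : (0:ℝ) < -(a + L) := by linarith
  have hw_eq : w * (-(a + L)) = Real.log b - Real.log (1 - b) - Real.log p - a
      + Real.log (1 - r * p) := by
    rw [hw_def, div_mul_cancel₀ _ hdenom.ne']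
  -- w > 0
  have hratio1 : r * p / (1 - r * p) < b / (1 - b) := by
    rw [div_lt_div_iff₀ h1rp h1b]; nlinarith
  have hlog1 : Real.log (r * p) - Real.log (1 - r * p) < Real.log b - Real.log (1 - b) := by
    have := Real.log_lt_log (div_pos (by positivity) h1rp) hratio1
    rwa [Real.log_div (by positivity) (ne_of_gt h1rp),
      Real.log_div (ne_of_gt hb0) (ne_of_gt h1b)] at this
  have hlogrp : Real.log (r * p) = a + Real.log p := Real.log_mul (ne_of_gt hr0) (ne_of_gt hp0)
  have hw0 : 0 < w := by
    apply div_pos _ hdenom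
    rw [hlogrp] at hlog1; linarith
  -- w < 1
  have hratio2 : b / (1 - b) < p / (1 - p) := by
    rw [div_lt_div_iff₀ h1b h1p]; nlinarith
  have hlog2 : Real.log b - Real.log (1 - b) < Real.log p - Real.log (1 - p) := by
    have := Real.log_lt_log (div_pos hb0 h1b) hratio2
    rwa [Real.log_div (ne_of_gt hb0) (ne_of_gt h1b),
      Real.log_div (ne_of_gt hp0) (ne_of_gt h1p)] at this
  have hw1 : w < 1 := by
    rw [hw_def, div_lt_one hdenom]
    have : a + L = a + (Real.log (1 - p) - Real.log (1 - r * p)) := by rw [← hLdiv]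
    linarith [hLdiv]
  refine ⟨w, hw0, hw1, ?_⟩
  -- tilt equation
  have htilt : Real.log b - Real.log (1 - b) = Real.log p + (1 - w) * a
      - w * Real.log (1 - p) - (1 - w) * Real.log (1 - r * p) := by
    have h := hw_eq
    rw [hLdiv] at h
    linear_combination (-1 : ℝ) * h
  -- A, B
  set A := p * r ^ (1 - w) with hA_def
  set B := (1 - p) ^ w * (1 - r * p) ^ (1 - w) with hB_def
  have hApos : 0 < A := by rw [hA_def]; positivity
  have hBpos : 0 < B := by rw [hB_def]; positivity
  have hlogA : Real.log A = Real.log p + (1 - w) * a := by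
    rw [hA_def, Real.log_mul (ne_of_gt hp0) (by positivity), Real.log_rpow hr0]
  have hlogB : Real.log B = w * Real.log (1 - p) + (1 - w) * Real.log (1 - r * p) := by
    rw [hB_def, Real.log_mul (by positivity) (by positivity), Real.log_rpow h1p,
      Real.log_rpow h1rp]
  have hAB : b * B = (1 - b) * A := by
    have hlogeq : Real.log (b * B) = Real.log ((1 - b) * A) := by
      rw [Real.log_mul (ne_of_gt hb0) (ne_of_gt hBpos),
        Real.log_mul (ne_of_gt h1b) (ne_of_gt hApos), hlogA, hlogB]
      linarith
    have := congrArg Real.exp hlogeq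
    rwa [Real.exp_log (by positivity), Real.exp_log (by positivity)] at this
  have hZval : Zf r w p = A / b := by
    rw [eq_div_iff (ne_of_gt hb0)]
    show (p * r ^ (1 - w) + (1 - p) ^ w * (1 - r * p) ^ (1 - w)) * b = A
    rw [← hA_def, ← hB_def]
    linear_combination hAB
  have hlogZ : Real.log (Zf r w p) = Real.log p + (1 - w) * a - Real.log b := by
    rw [hZval, Real.log_div (ne_of_gt hApos) (ne_of_gt hb0), hlogA]
  have hlog1b : Real.log (1 - b) = w * Real.log (1 - p) + (1 - w) * Real.log (1 - r * p)
      - Real.log (Zf r w p) := by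
    rw [hlogZ, ← hlogB]; linarith
  rw [binRelEnt_expand hb0 hb1 hp0 hp1]
  rw [hlog1b]
  have hlogb : Real.log b = Real.log p + (1 - w) * a - Real.log (Zf r w p) := by
    rw [hlogZ]; ring
  rw [hlogb]
  have : b * a = (1 - b) * L := hrel
  rw [hLdiv] at this
  linear_combination (1 - w) * this

set_option maxHeartbeats 1000000 in
lemma le_D {r p : ℝ} (hr0 : 0 < r) (hr1 : r < 1) (hp0 : 0 < p) (hp1 : p < 1) (w : ℝ) :
    -Real.log (Zf r w p) ≤ binRelEnt (betaFn r p) p := by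
  obtain ⟨⟨hb0, hb1⟩, ⟨hrpb, hbp⟩, hrel⟩ := beta_facts hr0 hr1 hp0 hp1
  set b := betaFn r p with hb_def
  have h1p : (0:ℝ) < 1 - p := by linarith
  have h1rp : (0:ℝ) < 1 - r * p := by nlinarith
  have h1b : (0:ℝ) < 1 - b := by linarith
  have hrp0 : (0:ℝ) < r * p := by positivity
  have hrp1 : r * p < 1 := by nlinarith
  set a := Real.log r with ha_def
  set L := Real.log ((1 - p) / (1 - r * p)) with hL_def
  have hLdiv : L = Real.log (1 - p) - Real.log (1 - r * p) :=
    Real.log_div (ne_of_gt h1p) (ne_of_gt h1rp)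
  set A := p * r ^ (1 - w) with hA_def
  set B := (1 - p) ^ w * (1 - r * p) ^ (1 - w) with hB_def
  have hApos : 0 < A := by rw [hA_def]; positivity
  have hBpos : 0 < B := by rw [hB_def]; positivity
  have hZdef : Zf r w p = A + B := rfl
  have hZpos : 0 < Zf r w p := by rw [hZdef]; linarith
  set t := A / Zf r w p with ht_def
  have ht0 : 0 < t := div_pos hApos hZpos
  have ht1 : t < 1 := by
    rw [ht_def, div_lt_one hZpos, hZdef]; linarith
  have h1t : 1 - t = B / Zf r w p := by
    rw [ht_def, hZdef]; field_simp; ring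
  have hlogA : Real.log A = Real.log p + (1 - w) * a := by
    rw [hA_def, Real.log_mul (ne_of_gt hp0) (by positivity), Real.log_rpow hr0]
  have hlogB : Real.log B = w * Real.log (1 - p) + (1 - w) * Real.log (1 - r * p) := by
    rw [hB_def, Real.log_mul (by positivity) (by positivity), Real.log_rpow h1p,
      Real.log_rpow h1rp]
  have hlogt : Real.log t = Real.log p + (1 - w) * a - Real.log (Zf r w p) := by
    rw [ht_def, Real.log_div (ne_of_gt hApos) (ne_of_gt hZpos), hlogA]
  have hlog1t : Real.log (1 - t) = w * Real.log (1 - p) + (1 - w) * Real.log (1 - r * p)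
      - Real.log (Zf r w p) := by
    rw [h1t, Real.log_div (ne_of_gt hBpos) (ne_of_gt hZpos), hlogB]
  have hkl : 0 ≤ b * Real.log (b / t) + (1 - b) * Real.log ((1 - b) / (1 - t)) :=
    kl_nonneg hb0 hb1 ht0 ht1
  have hkl' : 0 ≤ b * Real.log b - b * Real.log t + (1 - b) * Real.log (1 - b)
      - (1 - b) * Real.log (1 - t) := by
    rw [Real.log_div (ne_of_gt hb0) (ne_of_gt ht0),
      Real.log_div (ne_of_gt h1b) (by linarith : (1:ℝ) - t ≠ 0)] at hkl
    linarith
  have hDp := binRelEnt_expand hb0 hb1 hp0 hp1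
  have hDrp := binRelEnt_expand hb0 hb1 hrp0 hrp1
  have hlogrp : Real.log (r * p) = a + Real.log p := Real.log_mul (ne_of_gt hr0) (ne_of_gt hp0)
  -- same : binRelEnt b p = binRelEnt b (r*p)
  have hsame : binRelEnt b p = binRelEnt b (r * p) := by
    rw [hDp, hDrp, hlogrp]
    have h := hrel
    rw [hLdiv] at h
    linear_combination h
  -- identity : w * D_p + (1-w) * D_rp = KL(b,t) - log Z
  have hid : w * binRelEnt b p + (1 - w) * binRelEnt b (r * p)
      = (b * Real.log b - b * Real.log t + (1 - b) * Real.log (1 - b)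
        - (1 - b) * Real.log (1 - t)) - Real.log (Zf r w p) := by
    rw [hDp, hDrp, hlogrp, hlogt, hlog1t]
    ring
  have : binRelEnt b p = (b * Real.log b - b * Real.log t + (1 - b) * Real.log (1 - b)
      - (1 - b) * Real.log (1 - t)) - Real.log (Zf r w p) := by
    rw [← hid, ← hsame]; ring
  linarith

set_option maxHeartbeats 1000000 in
lemma mono_aux {r w p1 p2 : ℝ} (hr0 : 0 < r) (hr1 : r < 1) (hw0 : 0 < w) (hw1 : w < 1)
    (hp10 : 0 < p1) (h12 : p1 < p2) (hp21 : p2 < 1) :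
    p2 * (-Real.log (Zf r w p1)) < p1 * (-Real.log (Zf r w p2)) := by
  have hp20 : 0 < p2 := hp10.trans h12
  have hp11 : p1 < 1 := h12.trans hp21
  have h1p1 : (0:ℝ) < 1 - p1 := by linarith
  have h1p2 : (0:ℝ) < 1 - p2 := by linarith
  have h1rp1 : (0:ℝ) < 1 - r * p1 := by nlinarith
  have h1rp2 : (0:ℝ) < 1 - r * p2 := by nlinarith
  set t := p1 / p2 with ht_def
  have ht0 : 0 < t := div_pos hp10 hp20
  have ht1 : t < 1 := (div_lt_one hp20).2 h12
  have htp2 : t * p2 = p1 := by rw [ht_def]; field_simp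
  have h1t : (0:ℝ) < 1 - t := by linarith
  -- strict Hölder step
  have hne : (1 - t) * (t * (1 - r * p2)) ≠ t * (1 - p2) * (1 - t) := by
    intro h
    have h' : (t * (1 - t)) * (1 - r * p2) = (t * (1 - t)) * (1 - p2) := by linear_combination h
    have := mul_left_cancel₀ (by positivity : t * (1 - t) ≠ 0) h'
    nlinarith
  have hhold := holder2_strict h1t (by positivity : 0 < t * (1 - p2)) h1t
    (by positivity : 0 < t * (1 - r * p2)) hw0 hw1 hne
  have hsum1 : 1 - t + t * (1 - p2) = 1 - p1 := by rw [← htp2]; ring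
  have hsum2 : 1 - t + t * (1 - r * p2) = 1 - r * p1 := by rw [← htp2]; ring
  rw [hsum1, hsum2] at hhold
  have e1 : (1 - t) ^ w * (1 - t) ^ (1 - w) = 1 - t := by
    rw [← Real.rpow_add h1t]; norm_num
  have e2 : (t * (1 - p2)) ^ w * (t * (1 - r * p2)) ^ (1 - w)
      = t * ((1 - p2) ^ w * (1 - r * p2) ^ (1 - w)) := by
    rw [Real.mul_rpow ht0.le h1p2.le, Real.mul_rpow ht0.le h1rp2.le]
    have : t ^ w * t ^ (1 - w) = t := by rw [← Real.rpow_add ht0]; norm_num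
    calc t ^ w * (1 - p2) ^ w * (t ^ (1 - w) * (1 - r * p2) ^ (1 - w))
        = (t ^ w * t ^ (1 - w)) * ((1 - p2) ^ w * (1 - r * p2) ^ (1 - w)) := by ring
      _ = t * ((1 - p2) ^ w * (1 - r * p2) ^ (1 - w)) := by rw [this]
  rw [e1, e2] at hhold
  -- Z1 > (1-t) + t * Z2
  have hZ1gt : Zf r w p1 > (1 - t) + t * Zf r w p2 := by
    have hp1r : p1 * r ^ (1 - w) = t * (p2 * r ^ (1 - w)) := by rw [← htp2]; ring
    unfold Zf
    linarith [hhold, hp1r]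
  have hZ2pos : 0 < Zf r w p2 := Zf_pos hr0 hr1 hp20 hp21
  have hZ2lt1 : Zf r w p2 < 1 := Zf_lt_one hr0 hr1 hp20 hp21 hw0 hw1
  -- (1-t) + t Z2 ≥ Z2 ^ t
  have hamgm : (1:ℝ) ^ (1 - t) * Zf r w p2 ^ t ≤ (1 - t) * 1 + t * Zf r w p2 :=
    Real.geom_mean_le_arith_mean2_weighted h1t.le ht0.le zero_le_one hZ2pos.le (by ring)
  rw [Real.one_rpow] at hamgm
  have hZ1gt2 : Zf r w p2 ^ t < Zf r w p1 := by linarith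
  have hlog : t * Real.log (Zf r w p2) < Real.log (Zf r w p1) := by
    have := Real.log_lt_log (by positivity) hZ1gt2
    rwa [Real.log_rpow hZ2pos] at this
  have := mul_lt_mul_of_pos_left hlog hp20
  calc p2 * (-Real.log (Zf r w p1)) < p2 * (-(t * Real.log (Zf r w p2))) := by linarith
    _ = p1 * (-Real.log (Zf r w p2)) := by rw [← htp2]; ring

theorem stmt_18 (r : ℝ) (hr0 : 0 < r) (hr1 : r < 1) :
    StrictAntiOn (fun p : ℝ => p / binRelEnt (betaFn r p) p) (Set.Ioo 0 1) := by
  intro p1 hp1 p2 hp2 h12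
  simp only []
  obtain ⟨hp10, hp11⟩ := hp1
  obtain ⟨hp20, hp21⟩ := hp2
  obtain ⟨w, hw0, hw1, hDeq⟩ := exists_lam hr0 hr1 hp10 hp11
  have hD2ge : -Real.log (Zf r w p2) ≤ binRelEnt (betaFn r p2) p2 :=
    le_D hr0 hr1 hp20 hp21 w
  have hmono := mono_aux hr0 hr1 hw0 hw1 hp10 h12 hp21
  have hf1pos : 0 < -Real.log (Zf r w p1) := log_Zf_neg hr0 hr1 hp10 hp11 hw0 hw1
  have hf2pos : 0 < -Real.log (Zf r w p2) := log_Zf_neg hr0 hr1 hp20 hp21 hw0 hw1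
  have hD1pos : 0 < binRelEnt (betaFn r p1) p1 := by rw [hDeq]; exact hf1pos
  have hD2pos : 0 < binRelEnt (betaFn r p2) p2 := lt_of_lt_of_le hf2pos hD2ge
  rw [div_lt_div_iff₀ hD2pos hD1pos]
  calc p2 * binRelEnt (betaFn r p1) p1 = p2 * (-Real.log (Zf r w p1)) := by rw [hDeq]
    _ < p1 * (-Real.log (Zf r w p2)) := hmono
    _ ≤ p1 * binRelEnt (betaFn r p2) p2 := by
        exact mul_le_mul_of_nonneg_left hD2ge hp10.le
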